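/- Let Φ : [0,1] → Mat_{N×m}(ℂ) be continuously differentiable with Φ(t)†·Φ(t) = 1_m for all t, and let U : [0,1] → Mat_{N×N}(ℂ) be continuously differentiable such that for all t: U(t) is unitary, U(t)·conj(U(t)) = 1_N, and there exists a matrix w(t) with U(t)·conj(Φ(t)) = Φ(t)·w(t). Then w(t) = Φ(t)†·U(t)·conj(Φ(t)) is unitary and symmetric (w(t)ᵀ = w(t)) for each t, and the following identity of complex numbers holds: exp( -2·∫₀¹ tr(Φ(t)†·Φ'(t)) dt ) = exp( ∫₀¹ tr( Φ(t)†·U(t)ᵀ·(conj∘U)'(t)·Φ(t) ) dt ) · det w(1) · (det w(0))⁻¹, where (conj∘U)'(t) is the derivative of t ↦ conj(U(t)). -/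

import Mathlib

open Matrix

-- ===== auxiliary lemmas (already verified) =====
lemma entry_hasDerivAt_mul {p q r : ℕ} {A : ℝ → Matrix (Fin p) (Fin q) ℂ}
    {B : ℝ → Matrix (Fin q) (Fin r) ℂ}
    {A' : Matrix (Fin p) (Fin q) ℂ} {B' : Matrix (Fin q) (Fin r) ℂ} {t : ℝ}
    (hA : ∀ i j, HasDerivAt (fun s => A s i j) (A' i j) t)
    (hB : ∀ i j, HasDerivAt (fun s => B s i j) (B' i j) t) :
    ∀ i j, HasDerivAt (fun s => (A s * B s) i j) ((A' * B t + A t * B') i j) t := by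
  intro i j
  have h : HasDerivAt (fun s => ∑ k, A s i k * B s k j)
      (∑ k, (A' i k * B t k j + A t i k * B' k j)) t :=
    HasDerivAt.fun_sum fun k _ => (hA i k).mul (hB k j)
  simpa [Matrix.mul_apply, Matrix.add_apply, Finset.sum_add_distrib] using h

lemma entry_continuous_mul {p q r : ℕ} {A : ℝ → Matrix (Fin p) (Fin q) ℂ}
    {B : ℝ → Matrix (Fin q) (Fin r) ℂ}
    (hA : ∀ i j, Continuous fun t => A t i j)
    (hB : ∀ i j, Continuous fun t => B t i j) :
    ∀ i j, Continuous fun t => (A t * B t) i j := by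
  intro i j
  simp only [Matrix.mul_apply]
  exact continuous_finset_sum _ fun k _ => (hA i k).mul (hB k j)

lemma trace_continuous {p : ℕ} {A : ℝ → Matrix (Fin p) (Fin p) ℂ}
    (hA : ∀ i j, Continuous fun t => A t i j) :
    Continuous fun t => (A t).trace := by
  simp only [Matrix.trace, Matrix.diag]
  exact continuous_finset_sum _ fun k _ => hA k k

lemma hasDerivAt_det {n : ℕ} {M : ℝ → Matrix (Fin n) (Fin n) ℂ}
    {M' : Matrix (Fin n) (Fin n) ℂ} {t : ℝ}
    (h : ∀ i j, HasDerivAt (fun s => M s i j) (M' i j) t) :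
    HasDerivAt (fun s => (M s).det) (((M t).adjugate * M').trace) t := by
  have hmain : HasDerivAt (fun s => (M s).det)
      (∑ σ : Equiv.Perm (Fin n), ((Equiv.Perm.sign σ : ℤ) : ℂ) *
        ∑ i, (∏ j ∈ Finset.univ.erase i, M t (σ j) j) • M' (σ i) i) t := by
    simp_rw [Matrix.det_apply']
    exact HasDerivAt.fun_sum fun σ _ =>
      ((HasDerivAt.fun_finsetProd fun i _ => h (σ i) i).const_mul _)
  convert hmain using 1
  have key : ∀ i : Fin n, ((M t).adjugate * M') i i
      = ∑ σ : Equiv.Perm (Fin n), ((Equiv.Perm.sign σ : ℤ) : ℂ) *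
          ((∏ j ∈ Finset.univ.erase i, M t (σ j) j) * M' (σ i) i) := by
    intro i
    have h1 : ((M t).adjugate * M') i i
        = ((M t).adjugate *ᵥ fun k => M' k i) i := by
      simp [Matrix.mul_apply, Matrix.mulVec, dotProduct]
    rw [h1, ← Matrix.cramer_eq_adjugate_mulVec, Matrix.cramer_apply,
      Matrix.det_apply']
    refine Finset.sum_congr rfl fun σ _ => ?_
    congr 1
    have h2 : ∀ j : Fin n, ((M t).updateCol i fun k => M' k i) (σ j) j
        = Function.update (fun j => M t (σ j) j) i (M' (σ i) i) j := by
      intro j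
      by_cases hj : j = i
      · subst hj; simp [Matrix.updateCol_apply]
      · simp [Matrix.updateCol_apply, hj, Function.update_of_ne hj]
    rw [Finset.prod_congr rfl fun j _ => h2 j]
    rw [Finset.prod_update_of_mem (Finset.mem_univ i), Finset.erase_eq]
    ring
  rw [Matrix.trace]
  simp only [Matrix.diag]
  rw [Finset.sum_congr rfl fun i _ => key i, Finset.sum_comm]
  refine Finset.sum_congr rfl fun σ _ => ?_
  rw [Finset.mul_sum]
  refine Finset.sum_congr rfl fun i _ => ?_
  simp [smul_eq_mul]

-- small conj-map identities
lemma map_conj_conjTranspose {p q : ℕ} (A : Matrix (Fin p) (Fin q) ℂ) :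
    (Aᴴ).map (starRingEnd ℂ) = Aᵀ := by
  ext i j; simp [Matrix.conjTranspose_apply, Matrix.map_apply]

lemma transpose_map_conj {p q : ℕ} (A : Matrix (Fin p) (Fin q) ℂ) :
    (A.map (starRingEnd ℂ))ᵀ = Aᴴ := by
  ext i j; simp [Matrix.conjTranspose_apply, Matrix.map_apply]

lemma conjTranspose_map_conj {p q : ℕ} (A : Matrix (Fin p) (Fin q) ℂ) :
    (A.map (starRingEnd ℂ))ᴴ = Aᵀ := by
  ext i j; simp [Matrix.conjTranspose_apply, Matrix.map_apply]

lemma map_conj_map_conj {p q : ℕ} (A : Matrix (Fin p) (Fin q) ℂ) :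
    (A.map (starRingEnd ℂ)).map (starRingEnd ℂ) = A := by
  ext i j; simp [Matrix.map_apply]

lemma map_conj_one {p : ℕ} :
    (1 : Matrix (Fin p) (Fin p) ℂ).map (starRingEnd ℂ) = 1 := by
  ext i j; simp [Matrix.map_apply, Matrix.one_apply]

lemma transpose_conjT {p q : ℕ} (A : Matrix (Fin p) (Fin q) ℂ) :
    (Aᴴ)ᵀ = A.map (starRingEnd ℂ) := by
  ext i j; simp [Matrix.conjTranspose_apply, Matrix.map_apply]

lemma trace_map_conj {p : ℕ} (A : Matrix (Fin p) (Fin p) ℂ) :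
    (A.map (starRingEnd ℂ)).trace = (starRingEnd ℂ) A.trace := by
  simp [Matrix.trace, Matrix.diag, Matrix.map_apply, map_sum]

set_option maxHeartbeats 1000000 in
/-- **ℤ₂ quantization source for the symmetry-enriched Berry phase in an EAZ class AI
sector.**
Let `Φ t` (`t ∈ [0,1]`) be a C¹ family of orthonormal `N × m` frames (`Φ† Φ = 1`), and
`U t` a C¹ family of unitary matrices with `U ⬝ conj U = 1` (class AI antiunitary
symmetry squaring to `+1`) such that `U ⬝ conj Φ = Φ ⬝ w` for some matrix `w`.
Here `Φ'` is the derivative of `Φ` and `Uc'` the derivative of `t ↦ conj (U t)`.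
Then the sewing matrix `w t = Φ(t)† U(t) conj(Φ(t))` is unitary and symmetric, and
`exp(-2∫₀¹ tr(Φ† Φ')) = exp(∫₀¹ tr(Φ† Uᵀ (conj U)' Φ)) · det w(1) · (det w(0))⁻¹`. -/
theorem class_AI_wilson_line_sewing (N m : ℕ)
    (Φ Φ' : ℝ → Matrix (Fin N) (Fin m) ℂ)
    (U Uc' : ℝ → Matrix (Fin N) (Fin N) ℂ)
    (hΦ' : ∀ (t : ℝ) (i : Fin N) (j : Fin m),
      HasDerivAt (fun s => Φ s i j) (Φ' t i j) t)
    (hΦ'cont : ∀ (i : Fin N) (j : Fin m), Continuous fun t => Φ' t i j)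
    (hUc' : ∀ (t : ℝ) (i j : Fin N),
      HasDerivAt (fun s => (U s).map (starRingEnd ℂ) i j) (Uc' t i j) t)
    (hUc'cont : ∀ i j : Fin N, Continuous fun t => Uc' t i j)
    (hortho : ∀ t, (Φ t)ᴴ * Φ t = 1)
    (hunitary : ∀ t, U t ∈ Matrix.unitaryGroup (Fin N) ℂ)
    (hUconj : ∀ t, U t * (U t).map (starRingEnd ℂ) = 1)
    (hsew : ∀ t, ∃ wt : Matrix (Fin m) (Fin m) ℂ,
      U t * (Φ t).map (starRingEnd ℂ) = Φ t * wt) :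
    (∀ t, ((Φ t)ᴴ * U t * (Φ t).map (starRingEnd ℂ)) ∈ Matrix.unitaryGroup (Fin m) ℂ ∧
        ((Φ t)ᴴ * U t * (Φ t).map (starRingEnd ℂ))ᵀ
          = (Φ t)ᴴ * U t * (Φ t).map (starRingEnd ℂ)) ∧
    Complex.exp (-2 * ∫ t in (0:ℝ)..1, ((Φ t)ᴴ * Φ' t).trace)
      = Complex.exp (∫ t in (0:ℝ)..1, ((Φ t)ᴴ * (U t)ᵀ * Uc' t * Φ t).trace)
        * ((Φ 1)ᴴ * U 1 * (Φ 1).map (starRingEnd ℂ)).det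
        * (((Φ 0)ᴴ * U 0 * (Φ 0).map (starRingEnd ℂ)).det)⁻¹ := by
  -- notation
  set cP : ℝ → Matrix (Fin N) (Fin m) ℂ := fun t => (Φ t).map (starRingEnd ℂ) with hcP
  set V : ℝ → Matrix (Fin N) (Fin N) ℂ := fun t => (U t).map (starRingEnd ℂ) with hV
  set w : ℝ → Matrix (Fin m) (Fin m) ℂ := fun t => (Φ t)ᴴ * U t * cP t with hw
  set v : ℝ → Matrix (Fin m) (Fin m) ℂ := fun t => (Φ t)ᵀ * V t * Φ t with hv
  -- basic pointwise matrix facts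
  have hsew' : ∀ t, U t * cP t = Φ t * w t := by
    intro t
    obtain ⟨wt, hwt⟩ := hsew t
    have hwteq : w t = wt := by
      show (Φ t)ᴴ * U t * cP t = wt
      rw [Matrix.mul_assoc, hwt, ← Matrix.mul_assoc, hortho t, one_mul]
    rw [hwteq]; exact hwt
  have hUsU : ∀ t, (U t)ᴴ * U t = 1 := by
    intro t
    have := (Matrix.mem_unitaryGroup_iff').mp (hunitary t)
    rwa [Matrix.star_eq_conjTranspose] at this
  have hVU : ∀ t, V t = (U t)ᴴ := by
    intro t
    calc V t = 1 * V t := (one_mul _).symm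
      _ = (U t)ᴴ * (U t * V t) := by rw [← hUsU t, mul_assoc]
      _ = (U t)ᴴ := by rw [hUconj t, mul_one]
  have hUT : ∀ t, (U t)ᵀ = U t := by
    intro t
    have h1 := congrArg (fun A => A.map (starRingEnd ℂ)) (hVU t)
    rw [show V t = (U t).map (starRingEnd ℂ) from rfl] at h1
    rw [map_conj_map_conj, map_conj_conjTranspose] at h1
    exact h1.symm
  have hVT : ∀ t, (V t)ᵀ = V t := by
    intro t
    show ((U t).map (starRingEnd ℂ))ᵀ = (U t).map (starRingEnd ℂ)
    rw [← Matrix.transpose_map, hUT t]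
  have hwv : ∀ t, v t = (w t).map (starRingEnd ℂ) := by
    intro t
    show (Φ t)ᵀ * V t * Φ t = ((Φ t)ᴴ * U t * cP t).map (starRingEnd ℂ)
    rw [Matrix.map_mul, Matrix.map_mul, map_conj_conjTranspose, map_conj_map_conj]
  have hwT : ∀ t, (w t)ᵀ = w t := by
    intro t
    show ((Φ t)ᴴ * U t * cP t)ᵀ = (Φ t)ᴴ * U t * cP t
    rw [Matrix.transpose_mul, Matrix.transpose_mul, transpose_map_conj,
      hUT t, transpose_conjT, ← Matrix.mul_assoc]
  have hww : ∀ t, (w t)ᴴ * w t = 1 := by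
    intro t
    have hKK : (U t * cP t)ᴴ * (U t * cP t) = 1 := by
      rw [Matrix.conjTranspose_mul, Matrix.mul_assoc, ← Matrix.mul_assoc ((U t)ᴴ),
        hUsU t, Matrix.one_mul, conjTranspose_map_conj]
      calc (Φ t)ᵀ * cP t = ((Φ t)ᴴ * Φ t).map (starRingEnd ℂ) := by
            rw [Matrix.map_mul, map_conj_conjTranspose]
        _ = 1 := by rw [hortho t, map_conj_one]
    rw [hsew' t] at hKK
    rwa [Matrix.conjTranspose_mul, Matrix.mul_assoc,
      ← Matrix.mul_assoc ((Φ t)ᴴ), hortho t, one_mul] at hKK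
  have hwu : ∀ t, w t ∈ Matrix.unitaryGroup (Fin m) ℂ := by
    intro t
    rw [Matrix.mem_unitaryGroup_iff', Matrix.star_eq_conjTranspose]
    exact hww t
  have hconjw : ∀ t, (w t).map (starRingEnd ℂ) = (w t)ᴴ := by
    intro t
    ext i j
    have hij : w t j i = w t i j := by
      have h := congrFun (congrFun (hwT t) i) j
      rwa [Matrix.transpose_apply] at h
    simp [Matrix.conjTranspose_apply, Matrix.map_apply, hij]
  have hvw : ∀ t, v t * w t = 1 := by
    intro t
    rw [hwv t, hconjw t]; exact hww t
  have hwvone : ∀ t, w t * v t = 1 := fun t => mul_eq_one_comm.mp (hvw t)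
  have hVP : ∀ t, V t * Φ t = cP t * v t := by
    intro t
    have h1 := congrArg (fun A => A.map (starRingEnd ℂ)) (hsew' t)
    simp only [Matrix.map_mul] at h1
    rw [show (U t).map (starRingEnd ℂ) = V t from rfl,
      show (Φ t).map (starRingEnd ℂ) = cP t from rfl] at h1
    rw [show (cP t).map (starRingEnd ℂ) = Φ t from map_conj_map_conj _] at h1
    rw [h1, hwv t]
  have hvT : ∀ t, (v t)ᵀ = v t := by
    intro t
    rw [hwv t, ← Matrix.transpose_map, hwT t]
  have hPTV : ∀ t, (Φ t)ᵀ * V t = v t * (Φ t)ᴴ := by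
    intro t
    have h1 := congrArg Matrix.transpose (hVP t)
    rw [Matrix.transpose_mul, Matrix.transpose_mul, hVT t, hvT t,
      transpose_map_conj] at h1
    exact h1
  have hVUone : ∀ t, V t * U t = 1 := by
    intro t
    have h1 := congrArg (fun A => A.map (starRingEnd ℂ)) (hUconj t)
    simp only [Matrix.map_mul, map_conj_map_conj, map_conj_one] at h1
    exact h1
  have hwPT : ∀ t, w t * (Φ t)ᵀ = (Φ t)ᴴ * U t := by
    intro t
    calc w t * (Φ t)ᵀ = w t * (Φ t)ᵀ * (V t * U t) := by
          rw [hVUone t, Matrix.mul_one]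
      _ = w t * ((Φ t)ᵀ * V t) * U t := by
          rw [Matrix.mul_assoc (w t), ← Matrix.mul_assoc ((Φ t)ᵀ),
            ← Matrix.mul_assoc, ← Matrix.mul_assoc]
      _ = w t * v t * (Φ t)ᴴ * U t := by
          rw [hPTV t, ← Matrix.mul_assoc]
      _ = (Φ t)ᴴ * U t := by rw [hwvone t, Matrix.one_mul]
  -- entry derivative families
  have hPH : ∀ (t : ℝ) (i : Fin m) (j : Fin N),
      HasDerivAt (fun s => (Φ s)ᴴ i j) ((Φ' t)ᴴ i j) t := by
    intro t i j
    simpa [Matrix.conjTranspose_apply] using (hΦ' t j i).star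
  have hPT : ∀ (t : ℝ) (i : Fin m) (j : Fin N),
      HasDerivAt (fun s => (Φ s)ᵀ i j) ((Φ' t)ᵀ i j) t := by
    intro t i j
    simpa [Matrix.transpose_apply] using hΦ' t j i
  -- orthonormality derivative
  have horthod : ∀ t, (Φ' t)ᴴ * Φ t + (Φ t)ᴴ * Φ' t = 0 := by
    intro t
    ext i j
    have h1 : HasDerivAt (fun s => ((Φ s)ᴴ * Φ s) i j)
        (((Φ' t)ᴴ * Φ t + (Φ t)ᴴ * Φ' t) i j) t :=
      entry_hasDerivAt_mul (hPH t) (hΦ' t) i j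
    have h2 : HasDerivAt (fun s => ((Φ s)ᴴ * Φ s) i j) 0 t := by
      have : (fun s => ((Φ s)ᴴ * Φ s) i j) = fun _ => (1 : Matrix (Fin m) (Fin m) ℂ) i j := by
        funext s; rw [hortho s]
      rw [this]; exact hasDerivAt_const _ _
    have := h1.unique h2
    simpa using this
  -- trace facts
  have hg1conj : ∀ t, (starRingEnd ℂ) (((Φ t)ᴴ * Φ' t).trace)
      = -(((Φ t)ᴴ * Φ' t).trace) := by
    intro t
    have h1 : (starRingEnd ℂ) (((Φ t)ᴴ * Φ' t).trace) = (((Φ t)ᴴ * Φ' t)ᴴ).trace := by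
      rw [Matrix.trace_conjTranspose]; rfl
    rw [h1, Matrix.conjTranspose_mul, Matrix.conjTranspose_conjTranspose]
    have h2 : (Φ' t)ᴴ * Φ t = -((Φ t)ᴴ * Φ' t) :=
      eq_neg_of_add_eq_zero_left (horthod t)
    rw [h2, Matrix.trace_neg]
  -- the trace identity
  have hwtr : ∀ t, (w t * ((Φ' t)ᵀ * V t * Φ t + (Φ t)ᵀ * Uc' t * Φ t
        + (Φ t)ᵀ * V t * Φ' t)).trace
      = 2 * ((Φ t)ᴴ * Φ' t).trace + ((Φ t)ᴴ * (U t)ᵀ * Uc' t * Φ t).trace := by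
    intro t
    rw [Matrix.mul_add, Matrix.mul_add, Matrix.trace_add, Matrix.trace_add]
    have T1 : (w t * ((Φ' t)ᵀ * V t * Φ t)).trace = ((Φ t)ᴴ * Φ' t).trace := by
      rw [Matrix.mul_assoc ((Φ' t)ᵀ), hVP t, ← Matrix.mul_assoc ((Φ' t)ᵀ),
        ← Matrix.mul_assoc, Matrix.trace_mul_comm, ← Matrix.mul_assoc,
        ← Matrix.mul_assoc, hvw t, Matrix.one_mul]
      have h3 : (Φ' t)ᵀ * cP t = (((Φ' t)ᴴ * Φ t)).map (starRingEnd ℂ) := by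
        rw [Matrix.map_mul, map_conj_conjTranspose]
      rw [h3, trace_map_conj]
      have h4 : (Φ' t)ᴴ * Φ t = -((Φ t)ᴴ * Φ' t) :=
        eq_neg_of_add_eq_zero_left (horthod t)
      rw [h4, Matrix.trace_neg, map_neg, hg1conj t, neg_neg]
    have T2 : (w t * ((Φ t)ᵀ * Uc' t * Φ t)).trace
        = ((Φ t)ᴴ * (U t)ᵀ * Uc' t * Φ t).trace := by
      rw [← Matrix.mul_assoc, ← Matrix.mul_assoc, hwPT t, hUT t]
    have T3 : (w t * ((Φ t)ᵀ * V t * Φ' t)).trace = ((Φ t)ᴴ * Φ' t).trace := by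
      rw [hPTV t, ← Matrix.mul_assoc, ← Matrix.mul_assoc, hwvone t, Matrix.one_mul]
    rw [T1, T2, T3]; ring
  -- derivative of det v
  have hvd : ∀ t, HasDerivAt (fun s => (v s).det)
      ((v t).det * (2 * ((Φ t)ᴴ * Φ' t).trace
        + ((Φ t)ᴴ * (U t)ᵀ * Uc' t * Φ t).trace)) t := by
    intro t
    have hVe : ∀ i j, HasDerivAt (fun s => V s i j) (Uc' t i j) t := hUc' t
    have step1 : ∀ i j, HasDerivAt (fun s => ((Φ s)ᵀ * V s) i j)
        (((Φ' t)ᵀ * V t + (Φ t)ᵀ * Uc' t) i j) t :=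
      entry_hasDerivAt_mul (hPT t) hVe
    have step2 : ∀ i j, HasDerivAt (fun s => v s i j)
        ((((Φ' t)ᵀ * V t + (Φ t)ᵀ * Uc' t) * Φ t + ((Φ t)ᵀ * V t) * Φ' t) i j) t :=
      entry_hasDerivAt_mul step1 (hΦ' t)
    have hD := hasDerivAt_det step2
    have hadj : (v t).adjugate = (v t).det • w t := by
      calc (v t).adjugate = (w t * v t) * (v t).adjugate := by rw [hwvone t, one_mul]
        _ = w t * (v t * (v t).adjugate) := by rw [Matrix.mul_assoc]
        _ = w t * ((v t).det • 1) := by rw [Matrix.mul_adjugate]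
        _ = (v t).det • w t := by rw [Matrix.mul_smul, mul_one]
    have heq : ((v t).adjugate * (((Φ' t)ᵀ * V t + (Φ t)ᵀ * Uc' t) * Φ t
          + ((Φ t)ᵀ * V t) * Φ' t)).trace
        = (v t).det * (2 * ((Φ t)ᴴ * Φ' t).trace
          + ((Φ t)ᴴ * (U t)ᵀ * Uc' t * Φ t).trace) := by
      rw [hadj, Matrix.smul_mul, Matrix.trace_smul, smul_eq_mul]
      congr 1
      rw [← hwtr t]
      congr 1
      rw [Matrix.add_mul]
    rwa [heq] at hD
  -- continuity
  have hPcont : ∀ i j, Continuous fun t => Φ t i j :=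
    fun i j => continuous_iff_continuousAt.mpr fun t => (hΦ' t i j).continuousAt
  have hPHcont : ∀ i j, Continuous fun t => (Φ t)ᴴ i j := by
    intro i j
    simpa [Matrix.conjTranspose_apply] using (hPcont j i).star
  have hVcont : ∀ i j, Continuous fun t => V t i j :=
    fun i j => continuous_iff_continuousAt.mpr fun t => (hUc' t i j).continuousAt
  have hUcont : ∀ i j, Continuous fun t => U t i j := by
    intro i j
    have h1 := (hVcont i j).star
    have h2 : (fun t => star (V t i j)) = fun t => U t i j := by
      funext t
      show star ((U t).map (starRingEnd ℂ) i j) = U t i j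
      simp [Matrix.map_apply]
    rwa [h2] at h1
  have hUTcont : ∀ i j, Continuous fun t => (U t)ᵀ i j := by
    intro i j; simpa [Matrix.transpose_apply] using hUcont j i
  have hg1cont : Continuous fun t => ((Φ t)ᴴ * Φ' t).trace :=
    trace_continuous (entry_continuous_mul hPHcont hΦ'cont)
  have hg2cont : Continuous fun t => ((Φ t)ᴴ * (U t)ᵀ * Uc' t * Φ t).trace :=
    trace_continuous (entry_continuous_mul (entry_continuous_mul
      (entry_continuous_mul hPHcont hUTcont) hUc'cont) hPcont)
  set g : ℝ → ℂ := fun t => 2 * ((Φ t)ᴴ * Φ' t).trace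
    + ((Φ t)ᴴ * (U t)ᵀ * Uc' t * Φ t).trace with hgdef
  have hgcont : Continuous g := ((continuous_const.mul hg1cont).add hg2cont)
  set G : ℝ → ℂ := fun s => ∫ u in (0:ℝ)..s, g u with hGdef
  have hGd : ∀ s, HasDerivAt G (g s) s := by
    intro s
    exact intervalIntegral.integral_hasDerivAt_right
      (hgcont.intervalIntegrable _ _)
      (hgcont.stronglyMeasurableAtFilter _ _)
      hgcont.continuousAt
  -- the constancy argument
  have hhd : ∀ s, HasDerivAt (fun u => (v u).det * Complex.exp (-G u)) 0 s := by
    intro s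
    have hE : HasDerivAt (fun u => Complex.exp (-G u))
        (Complex.exp (-G s) * -(g s)) s := ((hGd s).neg).cexp
    have := (hvd s).fun_mul hE
    convert this using 1
    · rfl
    · simp only [hgdef]
      ring
  have hconst : (v (1:ℝ)).det * Complex.exp (-G 1)
      = (v (0:ℝ)).det * Complex.exp (-G 0) :=
    is_const_of_deriv_eq_zero (fun x => ((hhd x).differentiableAt))
      (fun x => (hhd x).deriv) 1 0
  have hG0 : G 0 = 0 := intervalIntegral.integral_same
  have hf10 : (v (1:ℝ)).det = (v (0:ℝ)).det * Complex.exp (G 1) := by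
    have h1 : (v (1:ℝ)).det * Complex.exp (-G 1) = (v (0:ℝ)).det := by
      rw [hconst, hG0]; simp
    calc (v (1:ℝ)).det
        = (v (1:ℝ)).det * Complex.exp (-G 1) * Complex.exp (G 1) := by
          rw [mul_assoc, ← Complex.exp_add]; simp
      _ = (v (0:ℝ)).det * Complex.exp (G 1) := by rw [h1]
  -- determinant relations
  have hdetvw : ∀ t, (v t).det * (w t).det = 1 := by
    intro t
    rw [← Matrix.det_mul, hvw t, Matrix.det_one]
  have hdetwne : ∀ t, (w t).det ≠ 0 := by
    intro t h0
    have := hdetvw t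
    rw [h0, mul_zero] at this
    exact zero_ne_one this
  have hdetv : ∀ t, (v t).det = ((w t).det)⁻¹ := by
    intro t
    exact eq_inv_of_mul_eq_one_left (hdetvw t)
  -- integral splitting
  have hG1 : G 1 = 2 * (∫ t in (0:ℝ)..1, ((Φ t)ᴴ * Φ' t).trace)
      + ∫ t in (0:ℝ)..1, ((Φ t)ᴴ * (U t)ᵀ * Uc' t * Φ t).trace := by
    show (∫ u in (0:ℝ)..1, g u) = _
    rw [hgdef]
    rw [intervalIntegral.integral_add (f := fun t => 2 * ((Φ t)ᴴ * Φ' t).trace)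
      (((continuous_const.mul hg1cont).intervalIntegrable _ _))
      (hg2cont.intervalIntegrable _ _),
      intervalIntegral.integral_const_mul]
  constructor
  · exact fun t => ⟨hwu t, hwT t⟩
  · -- final algebra
    set I1 : ℂ := ∫ t in (0:ℝ)..1, ((Φ t)ᴴ * Φ' t).trace with hI1
    set I2 : ℂ := ∫ t in (0:ℝ)..1, ((Φ t)ᴴ * (U t)ᵀ * Uc' t * Φ t).trace with hI2
    show Complex.exp (-2 * I1) = Complex.exp I2 * (w 1).det * ((w 0).det)⁻¹
    have key : ((w 1).det)⁻¹ = ((w 0).det)⁻¹ * Complex.exp (2 * I1 + I2) := by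
      rw [← hdetv 1, ← hdetv 0, hf10, hG1]
    have ha := hdetwne 0
    have hb := hdetwne 1
    have hb1 : (w 1).det = (Complex.exp (2 * I1 + I2))⁻¹ * (w 0).det := by
      have h2 := congrArg (fun z => z⁻¹) key
      simp only [inv_inv, mul_inv] at h2
      rw [h2]; ring
    rw [hb1, ← Complex.exp_neg]
    rw [show Complex.exp I2 * (Complex.exp (-(2 * I1 + I2)) * (w 0).det) * ((w 0).det)⁻¹
        = Complex.exp I2 * Complex.exp (-(2 * I1 + I2)) * ((w 0).det * ((w 0).det)⁻¹) from by
      ring]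
    rw [mul_inv_cancel₀ ha, mul_one, ← Complex.exp_add]
    congr 1
    ring
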